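/- Let (X,d) be a complete metric space satisfying the weak doubling property with constant c. Then for every compact subset S ⊆ X and every δ > 0, ρ_δ(S) ≤ c·ν_δ(S). -/

import Mathlib

open Metric Set

section Defs

variable {X : Type*} [MetricSpace X]

/-- `γ` is a geodesic parametrized by arclength on the interval `[0, l]`. -/
def IsGeodesicMap (γ : ℝ → X) (l : ℝ) : Prop :=
  ∀ s ∈ Set.Icc (0 : ℝ) l, ∀ t ∈ Set.Icc (0 : ℝ) l, dist (γ s) (γ t) = |s - t|

/-- A geodesic metric space: every pair of points is joined by a geodesic. -/
def IsGeodesicSpace (X : Type*) [MetricSpace X] : Prop :=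
  ∀ x y : X, ∃ γ : ℝ → X, IsGeodesicMap γ (dist x y) ∧ γ 0 = x ∧ γ (dist x y) = y

/-- A Busemann space: a geodesic metric space in which the distance between
any two (affinely reparametrized) geodesics is convex. -/
def IsBusemannSpace (X : Type*) [MetricSpace X] : Prop :=
  IsGeodesicSpace X ∧
    ∀ (γ γ' : ℝ → X) (l l' : ℝ), 0 ≤ l → 0 ≤ l' →
      IsGeodesicMap γ l → IsGeodesicMap γ' l' →
        ∀ t ∈ Set.Icc (0 : ℝ) 1,
          dist (γ (t * l)) (γ' (t * l')) ≤
            (1 - t) * dist (γ 0) (γ' 0) + t * dist (γ l) (γ' l')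

/-- A Busemann surface: a Busemann space homeomorphic to the Euclidean plane. -/
def IsBusemannSurface (X : Type*) [MetricSpace X] : Prop :=
  IsBusemannSpace X ∧ Nonempty (X ≃ₜ EuclideanSpace ℝ (Fin 2))

/-- The covering number `ρ_δ(S)`: the least number of closed balls of radius `δ`
(centered at arbitrary points of `X`) needed to cover `S`. -/
noncomputable def covNum (δ : ℝ) (S : Set X) : ℕ∞ :=
  sInf {n : ℕ∞ | ∃ T : Set X, T.encard = n ∧ S ⊆ ⋃ x ∈ T, Metric.closedBall x δ}

/-- The packing number `ν_δ(S)`: the largest cardinality of a subset `P ⊆ S`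
whose points are pairwise at distance `> 2δ`. -/
noncomputable def packNum (δ : ℝ) (S : Set X) : ℕ∞ :=
  sSup {n : ℕ∞ | ∃ P : Set X, P ⊆ S ∧ P.encard = n ∧
    P.Pairwise fun p q => 2 * δ < dist p q}

/-- The geodesic segment `[x,y]` in a (uniquely geodesic) metric space. -/
def seg (x y : X) : Set X := {z | dist x z + dist z y = dist x y}

/-- A set is (geodesically) convex if it contains the segment between any two of its points. -/
def GConvex (C : Set X) : Prop := ∀ x ∈ C, ∀ y ∈ C, seg x y ⊆ C

/-- The (geodesic) convex hull of a set. -/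
def gHull (Q : Set X) : Set X := ⋂₀ {C : Set X | GConvex C ∧ Q ⊆ C}

/-- The triangle `Δ(x,y,z)`: the convex hull of `{x,y,z}`. -/
def triangleG (x y z : X) : Set X := gHull {x, y, z}

/-- The perimeter `π(a,b,c)` of a triangle. -/
def perim (a b c : X) : ℝ := dist a b + dist b c + dist c a

/-- Three points are collinear if one lies on the geodesic segment between the other two. -/
def CollinearPts (a b c : X) : Prop := b ∈ seg a c ∨ a ∈ seg b c ∨ c ∈ seg a b

/-- A geodesic line: the image of an isometric embedding of `ℝ`. -/
def IsGeodesicLine (L : Set X) : Prop := ∃ γ : ℝ → X, Isometry γ ∧ L = Set.range γ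

/-- A closed halfplane determined by the line `L`: the union of `L` with a
connected component of its complement. -/
def IsHalfplane (L H : Set X) : Prop :=
  ∃ p, p ∉ L ∧ H = connectedComponentIn Lᶜ p ∪ L

/-- The line `L` separates `A` from `B`: they lie in different closed halfplanes of `L`. -/
def LineSep (L A B : Set X) : Prop :=
  ∃ H₁ H₂ : Set X, IsHalfplane L H₁ ∧ IsHalfplane L H₂ ∧ H₁ ≠ H₂ ∧ A ⊆ H₁ ∧ B ⊆ H₂

/-- The shade `Sh_u(x,y)` of the segment `[x,y]` with respect to `u`. -/
def Shade (u x y : X) : Set X :=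
  {p | (seg u p ∩ seg x y).Nonempty ∧
    ∃ L : Set X, IsGeodesicLine L ∧ u ∈ L ∧ p ∈ L ∧ LineSep L {x} {y}}

/-- The shade `St_u(x,y,z)` of the triangle `Δ(x,y,z)` with respect to `u`. -/
def TriShade (u x y z : X) : Set X := Shade u x y ∪ Shade u y z ∪ Shade u z x

end Defs

/-- The weak doubling property with constant `c`. -/
def WeakDoubling (X : Type*) [MetricSpace X] (c : ℕ) : Prop :=
  ∀ δ : ℝ, 0 < δ → ∀ S : Set X, IsCompact S → S.Nonempty →
    ∃ v ∈ S, covNum δ (Metric.closedBall v (2 * δ) ∩ S) ≤ (c : ℕ∞)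

section AuxLemmas

variable {X : Type*} [MetricSpace X]

lemma covNum_le_encard {δ : ℝ} {S T : Set X}
    (h : S ⊆ ⋃ x ∈ T, Metric.closedBall x δ) : covNum δ S ≤ T.encard :=
  sInf_le ⟨T, rfl, h⟩

lemma covNum_set_nonempty (δ : ℝ) (hδ : 0 ≤ δ) (S : Set X) :
    {n : ℕ∞ | ∃ T : Set X, T.encard = n ∧ S ⊆ ⋃ x ∈ T, Metric.closedBall x δ}.Nonempty :=
  ⟨S.encard, S, rfl, fun x hx => Set.mem_biUnion hx (Metric.mem_closedBall_self hδ)⟩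

lemma exists_cover (δ : ℝ) (hδ : 0 ≤ δ) (S : Set X) :
    ∃ T : Set X, T.encard = covNum δ S ∧ S ⊆ ⋃ x ∈ T, Metric.closedBall x δ :=
  csInf_mem (covNum_set_nonempty δ hδ S)

lemma covNum_mono {δ : ℝ} {A B : Set X} (h : A ⊆ B) : covNum δ A ≤ covNum δ B :=
  sInf_le_sInf fun n hn => by
    obtain ⟨T, hT1, hT2⟩ := hn
    exact ⟨T, hT1, h.trans hT2⟩

lemma covNum_union_le {δ : ℝ} (hδ : 0 ≤ δ) (A B : Set X) :
    covNum δ (A ∪ B) ≤ covNum δ A + covNum δ B := by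
  obtain ⟨Ta, hTa1, hTa2⟩ := exists_cover δ hδ A
  obtain ⟨Tb, hTb1, hTb2⟩ := exists_cover δ hδ B
  calc covNum δ (A ∪ B) ≤ (Ta ∪ Tb).encard := by
        refine covNum_le_encard (Set.union_subset ?_ ?_)
        · exact hTa2.trans (Set.biUnion_subset_biUnion_left Set.subset_union_left)
        · exact hTb2.trans (Set.biUnion_subset_biUnion_left Set.subset_union_right)
    _ ≤ Ta.encard + Tb.encard := Set.encard_union_le Ta Tb
    _ = covNum δ A + covNum δ B := by rw [hTa1, hTb1]

lemma covNum_empty_le (δ : ℝ) : covNum δ (∅ : Set X) ≤ 0 := by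
  have := covNum_le_encard (δ := δ) (S := (∅ : Set X)) (T := (∅ : Set X)) (by simp)
  simpa using this

lemma le_packNum {δ : ℝ} {S P : Set X} (h1 : P ⊆ S)
    (h2 : P.Pairwise fun p q => 2 * δ < dist p q) : P.encard ≤ packNum δ S :=
  le_sSup ⟨P, h1, rfl, h2⟩

lemma perturb_packing {δ : ℝ} (hδ : 0 < δ) {A P : Set X} (hPc : P ⊆ closure A)
    (hfin : P.Finite) (hpair : P.Pairwise fun p q => 2 * δ < dist p q) :
    ∃ Q : Set X, Q ⊆ A ∧ Q.encard = P.encard ∧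
      Q.Pairwise fun p q => 2 * δ < dist p q := by
  classical
  set F := hfin.toFinset with hF
  set D : Finset ℝ := ((F ×ˢ F).filter fun pq => pq.1 ≠ pq.2).image
      fun pq => dist pq.1 pq.2 with hD
  have hDmem : ∀ r ∈ D, 2 * δ < r := by
    intro r hr
    simp only [hD, Finset.mem_image, Finset.mem_filter, Finset.mem_product] at hr
    obtain ⟨⟨p, q⟩, ⟨⟨hp, hq⟩, hne⟩, rfl⟩ := hr
    exact hpair (hfin.mem_toFinset.mp hp) (hfin.mem_toFinset.mp hq) hne
  set ε : ℝ := if h : D.Nonempty then (D.min' h - 2 * δ) / 2 else 1 with hε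
  have hεpos : 0 < ε := by
    rw [hε]; split_ifs with h
    · have := hDmem _ (D.min'_mem h); linarith
    · norm_num
  have hkey : ∀ p ∈ P, ∀ q ∈ P, p ≠ q → 2 * δ + 2 * ε ≤ dist p q := by
    intro p hp q hq hne
    have hd : dist p q ∈ D := by
      simp only [hD, Finset.mem_image, Finset.mem_filter, Finset.mem_product]
      exact ⟨(p, q), ⟨⟨hfin.mem_toFinset.mpr hp, hfin.mem_toFinset.mpr hq⟩, hne⟩, rfl⟩
    have hne' : D.Nonempty := ⟨_, hd⟩
    rw [hε, dif_pos hne']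
    have := D.min'_le _ hd
    linarith
  have hch : ∀ p ∈ P, ∃ b ∈ A, dist p b < ε := fun p hp =>
    Metric.mem_closure_iff.mp (hPc hp) ε hεpos
  choose! f hfA hfd using hch
  have hdist : ∀ p ∈ P, ∀ q ∈ P, p ≠ q → 2 * δ < dist (f p) (f q) := by
    intro p hp q hq hne
    have h1 := hfd p hp
    have h2 := hfd q hq
    have h3 := hkey p hp q hq hne
    have h4 := dist_triangle4 p (f p) (f q) q
    have h5 : dist (f q) q = dist q (f q) := dist_comm _ _
    linarith
  have hinj : Set.InjOn f P := by
    intro p hp q hq hfe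
    by_contra hne
    have := hdist p hp q hq hne
    rw [hfe] at this
    simp at this
    linarith
  refine ⟨f '' P, ?_, hinj.encard_image, ?_⟩
  · rintro _ ⟨p, hp, rfl⟩; exact hfA p hp
  · rintro _ ⟨p, hp, rfl⟩ _ ⟨q, hq, rfl⟩ hne
    exact hdist p hp q hq fun h => hne (by rw [h])

lemma wd_aux (c : ℕ) (hwd : WeakDoubling X c) {δ : ℝ} (hδ : 0 < δ) :
    ∀ n : ℕ, ∀ K : Set X, IsCompact K → packNum δ K ≤ (n : ℕ∞) →
      covNum δ K ≤ (c : ℕ∞) * n := by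
  intro n
  induction n with
  | zero =>
    intro K _ hpack
    have hK : K = ∅ := by
      by_contra h
      obtain ⟨x, hx⟩ := Set.nonempty_iff_ne_empty.mpr h
      have h1 : ({x} : Set X).encard ≤ packNum δ K :=
        le_packNum (Set.singleton_subset_iff.mpr hx) (Set.pairwise_singleton _ _)
      rw [Set.encard_singleton] at h1
      have := h1.trans hpack
      simp at this
    subst hK
    simpa using covNum_empty_le (X := X) δ
  | succ n ih =>
    intro K hK hpack
    rcases Set.eq_empty_or_nonempty K with hKe | hKne
    · subst hKe
      exact (covNum_empty_le (X := X) δ).trans zero_le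
    obtain ⟨v, hv, hcov⟩ := hwd δ hδ K hK hKne
    set K' : Set X := {x ∈ K | 2 * δ < dist x v} with hK'
    set L : Set X := closure K' with hL
    have hK'K : K' ⊆ K := fun x hx => hx.1
    have hLK : L ⊆ K := closure_minimal hK'K hK.isClosed
    have hLc : IsCompact L := hK.of_isClosed_subset isClosed_closure hLK
    -- packing bound on L
    have hpackL : packNum δ L ≤ (n : ℕ∞) := by
      refine sSup_le ?_
      rintro m ⟨P, hPL, rfl, hPpair⟩
      have hmK : P.encard ≤ packNum δ K := le_packNum (hPL.trans hLK) hPpair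
      have hfin : P.Finite := by
        rw [← Set.encard_ne_top_iff]
        intro h
        rw [h] at hmK
        exact ENat.coe_ne_top (n + 1) (top_le_iff.mp (hmK.trans hpack))
      obtain ⟨Q, hQA, hQcard, hQpair⟩ := perturb_packing hδ hPL hfin hPpair
      have hvQ : v ∉ Q := by
        intro hvQ
        have := (hQA hvQ).2
        simp at this
        linarith
      have hins : (insert v Q).encard ≤ packNum δ K := by
        refine le_packNum ?_ ?_
        · exact Set.insert_subset hv ((hQA.trans hK'K))
        · intro a ha b hb hab
          rcases ha with rfl | ha
          · rcases hb with rfl | hb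
            · exact absurd rfl hab
            · have := ((hQA hb).2); rw [dist_comm]; exact this
          · rcases hb with rfl | hb
            · exact (hQA ha).2
            · exact hQpair ha hb hab
      rw [Set.encard_insert_of_notMem hvQ, hQcard] at hins
      have h2 : P.encard + 1 ≤ (n : ℕ∞) + 1 := hins.trans hpack
      exact (ENat.add_le_add_iff_right (by simp)).mp h2
    have hsub : K ⊆ (Metric.closedBall v (2 * δ) ∩ K) ∪ L := by
      intro x hx
      rcases le_or_gt (dist x v) (2 * δ) with h | h
      · exact Or.inl ⟨Metric.mem_closedBall.mpr h, hx⟩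
      · exact Or.inr (subset_closure ⟨hx, h⟩)
    calc covNum δ K ≤ covNum δ ((Metric.closedBall v (2 * δ) ∩ K) ∪ L) :=
          covNum_mono hsub
      _ ≤ covNum δ (Metric.closedBall v (2 * δ) ∩ K) + covNum δ L :=
          covNum_union_le hδ.le _ _
      _ ≤ (c : ℕ∞) + (c : ℕ∞) * n := add_le_add hcov (ih L hLc hpackL)
      _ = (c : ℕ∞) * (n + 1) := by ring
    
end AuxLemmas

/-- weak doubling implies the covering–packing inequality. -/
theorem covNum_le_mul_packNum_of_weakDoubling {X : Type*} [MetricSpace X]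
    [CompleteSpace X] (c : ℕ) (hwd : WeakDoubling X c)
    (S : Set X) (hS : IsCompact S) (δ : ℝ) (hδ : 0 < δ) :
    covNum δ S ≤ (c : ℕ∞) * packNum δ S := by
  rcases Set.eq_empty_or_nonempty S with hSe | hSne
  · subst hSe
    exact (covNum_empty_le (X := X) δ).trans zero_le
  have hc0 : c ≠ 0 := by
    intro hc
    subst hc
    obtain ⟨v, hv, hcov⟩ := hwd δ hδ S hS hSne
    have h0 : covNum δ (Metric.closedBall v (2 * δ) ∩ S) = 0 := le_antisymm (by simpa using hcov) zero_le
    obtain ⟨T, hT1, hT2⟩ := exists_cover δ (by linarith : (0:ℝ) ≤ δ) (Metric.closedBall v (2 * δ) ∩ S)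
    rw [h0, Set.encard_eq_zero] at hT1
    subst hT1
    have hvmem : v ∈ Metric.closedBall v (2 * δ) ∩ S :=
      ⟨Metric.mem_closedBall_self (by linarith), hv⟩
    have := hT2 hvmem
    simp at this
  cases h : packNum δ S with
  | top =>
    rw [ENat.mul_top (show (c : ℕ∞) ≠ 0 by exact_mod_cast hc0)]
    exact le_top
  | coe n =>
    exact wd_aux c hwd hδ n S hS (le_of_eq h)
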